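/- Fix parameters a > 0, B > 0, q_max > 0 and m ∈ (0,1) with m(B + √(2 a q_max)) < B. Let r₀ ∈ [B, B + √(2 a q_max)]. Define q̃(t) := q_max + (m r₀ − B)t + a t²/2 and r̃(t) := m r₀ + a t for t ∈ ℝ, so that (q̃, r̃) solves the flow dynamics q̇ = r − B, ṙ = a from the post-jump point g(q_max, r₀) = (q_max, m r₀). Set T̂ := 2(B − m r₀)/a. Then T̂ > 0, q̃(t) < q_max for every t ∈ (0, T̂), q̃(T̂) = q_max, r̃(T̂) = 2B − m r₀ ≥ B, and T̂ = inf{t ≥ 0 : (q̃(t), r̃(t)) ∈ D}. Consequently the hybrid Poincaré map satisfies P(q_max, r₀) = (q_max, 2B − m r₀). -/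

import Mathlib

open Set

/-- Computation of the hybrid Poincaré map of the congestion-control system:
from a jump-set point `(q_max, r₀)`, the flow started at the post-jump point
`(q_max, m r₀)` first returns to the jump set at time `T̂ = 2(B − m r₀)/a`, at the
point `(q_max, 2B − m r₀)`. -/
theorem stmt_11 (a B qmax m r₀ : ℝ) (ha : 0 < a) (hB : 0 < B) (hqmax : 0 < qmax)
    (hm : m ∈ Ioo (0:ℝ) 1)
    (hcond : m * (B + Real.sqrt (2*a*qmax)) < B)
    (hr₀ : r₀ ∈ Icc B (B + Real.sqrt (2*a*qmax)))
    (qt rt : ℝ → ℝ)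
    (hqt : ∀ t, qt t = qmax + (m*r₀ - B)*t + a*t^2/2)
    (hrt : ∀ t, rt t = m*r₀ + a*t)
    (D : Set (ℝ × ℝ)) (hD : D = {x : ℝ × ℝ | x.1 = qmax ∧ B ≤ x.2})
    (That : ℝ) (hThat : That = 2*(B - m*r₀)/a) :
    (∀ t, HasDerivAt qt (rt t - B) t) ∧ (∀ t, HasDerivAt rt a t) ∧
    qt 0 = qmax ∧ rt 0 = m * r₀ ∧
    0 < That ∧
    (∀ t ∈ Ioo (0:ℝ) That, qt t < qmax) ∧
    qt That = qmax ∧ rt That = 2*B - m*r₀ ∧ B ≤ 2*B - m*r₀ ∧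
    That = sInf {t : ℝ | 0 ≤ t ∧ (qt t, rt t) ∈ D} ∧
    (qt That, rt That) = (qmax, 2*B - m*r₀) := by
  have hqe : qt = fun t => qmax + (m*r₀ - B)*t + a*t^2/2 := funext hqt
  have hre : rt = fun t => m*r₀ + a*t := funext hrt
  subst hqe hre
  -- m * r₀ < B
  have hmr : m * r₀ < B := by
    have h1 : m * r₀ ≤ m * (B + Real.sqrt (2*a*qmax)) :=
      mul_le_mul_of_nonneg_left hr₀.2 hm.1.le
    linarith
  have hT : 0 < That := by
    rw [hThat]
    have : 0 < B - m*r₀ := by linarith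
    positivity
  have hTe : a * That = 2*(B - m*r₀) := by
    rw [hThat]; field_simp
  have hqT : qmax + (m*r₀ - B)*That + a*That^2/2 = qmax := by
    have : a*That^2 = (2*(B - m*r₀))*That := by rw [← hTe]; ring
    rw [this]; ring
  have hrT : m*r₀ + a*That = 2*B - m*r₀ := by rw [hTe]; ring
  have hIoo : ∀ t ∈ Ioo (0:ℝ) That, qmax + (m*r₀ - B)*t + a*t^2/2 < qmax := by
    rintro t ⟨ht0, htT⟩
    have h1 : a * t < a * That := by exact mul_lt_mul_of_pos_left htT ha
    nlinarith [mul_pos ha ht0]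
  refine ⟨?_, ?_, by simp, by simp, hT, hIoo, hqT, hrT, by linarith, ?_, by
    simp only [hqT, hrT]⟩
  · intro t
    have h := (((hasDerivAt_const t qmax).add
        ((hasDerivAt_id t).const_mul (m*r₀ - B))).add
        (((hasDerivAt_pow 2 t)).const_mul a |>.div_const 2))
    refine h.congr_deriv ?_
    norm_num; ring
  · intro t
    have h : HasDerivAt (fun t => m*r₀ + a*t) (0 + a*1) t :=
      (hasDerivAt_const t (m*r₀)).add ((hasDerivAt_id t).const_mul a)
    simpa using h
  · -- sInf
    subst hD
    have hmem : That ∈ {t : ℝ | 0 ≤ t ∧ (qmax + (m*r₀ - B)*t + a*t^2/2 = qmax ∧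
        B ≤ m*r₀ + a*t)} := ⟨hT.le, by rw [hqT], by rw [hrT]; linarith⟩
    have hlb : ∀ t ∈ {t : ℝ | 0 ≤ t ∧ (qmax + (m*r₀ - B)*t + a*t^2/2 = qmax ∧
        B ≤ m*r₀ + a*t)}, That ≤ t := by
      rintro t ⟨ht0, hq, hr⟩
      by_contra hlt
      push_neg at hlt
      rcases eq_or_lt_of_le ht0 with h0 | h0
      · rw [← h0] at hr; simp at hr; linarith
      · have := hIoo t ⟨h0, hlt⟩
        linarith
    exact le_antisymm (le_csInf ⟨That, hmem⟩ hlb) (csInf_le ⟨That, hlb⟩ hmem)
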